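/- arXiv:1802.02362 — 3 statements merged into one kernel-verified Lean document; each statement's English description precedes it below -/
import Mathlib

section
/- For every integer j ≥ 1 and every real ℓ ≥ 0: the map z ↦ γ_{jz+ℓ}^E is continuous on [0,∞), and e^{−jz} γ_{jz+ℓ}^E → 0 as z → ∞ (equivalently, e^{−jz}(γ_ℓ^E − γ_{jz+ℓ}^E) → 0 as z → ∞). -/
open MeasureTheory Set Filter Topology

private lemma stmt15_core (u : ℝ) : |1 - Real.exp (-u) - u| ≤ 3 * Real.exp |u| * u ^ 2 := by
  rcases le_or_gt |u| 1 with h | h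
  · have h1 : |Real.exp (-u) - 1 - (-u)| ≤ (-u) ^ 2 :=
      Real.abs_exp_sub_one_sub_id_le (by simpa using h)
    have h2 : |1 - Real.exp (-u) - u| = |Real.exp (-u) - 1 - (-u)| := by
      rw [← abs_neg]; ring_nf
    have h3 : (1 : ℝ) ≤ Real.exp |u| := Real.one_le_exp (abs_nonneg u)
    nlinarith [sq_nonneg u]
  · have h1 : |1 - Real.exp (-u) - u| ≤ 1 + Real.exp (-u) + |u| := by
      calc |1 - Real.exp (-u) - u| ≤ |1 - Real.exp (-u)| + |u| := abs_sub _ _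
        _ ≤ (|(1:ℝ)| + |Real.exp (-u)|) + |u| := by gcongr; exact abs_sub _ _
        _ = 1 + Real.exp (-u) + |u| := by rw [abs_one, abs_of_pos (Real.exp_pos _)]
    have h2 : Real.exp (-u) ≤ Real.exp |u| := Real.exp_le_exp.2 (neg_le_abs u)
    have h3 : |u| ≤ Real.exp |u| := (Real.add_one_le_exp |u|).trans' (by linarith [abs_nonneg u])
    have h4 : (1:ℝ) ≤ Real.exp |u| := Real.one_le_exp (abs_nonneg u)
    have h5 : 1 ≤ u ^ 2 := by nlinarith [abs_nonneg u, sq_abs u]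
    nlinarith [Real.exp_pos |u|]

private lemma stmt15_sqexp {x : ℝ} (hx : 0 ≤ x) : x ^ 2 * Real.exp (-(x/2)) ≤ 16 := by
  have h1 : x/4 + 1 ≤ Real.exp (x/4) := Real.add_one_le_exp (x/4)
  have h2 : x^2/16 ≤ Real.exp (x/2) := by
    have hp := Real.exp_pos (x/4)
    calc x^2/16 = (x/4)^2 := by ring
      _ ≤ (x/4 + 1)^2 := by nlinarith
      _ ≤ Real.exp (x/4) ^ 2 := by nlinarith
      _ = Real.exp (x/2) := by rw [sq, ← Real.exp_add]; ring_nf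
  have hE := Real.exp_pos (x/2)
  have hprod : Real.exp (-(x/2)) * Real.exp (x/2) = 1 := by
    rw [← Real.exp_add]; simp
  nlinarith [Real.exp_pos (-(x/2)), sq_nonneg x]

private lemma stmt15_xexp {x : ℝ} (hx : 0 ≤ x) : x * Real.exp (-x) ≤ 1 := by
  have h1 : x + 1 ≤ Real.exp x := Real.add_one_le_exp x
  have hprod : Real.exp (-x) * Real.exp x = 1 := by rw [← Real.exp_add]; simp
  nlinarith [Real.exp_pos (-x), Real.exp_pos x]

private lemma stmt15_sqexp' {x : ℝ} (hx : 0 ≤ x) : x ^ 2 * Real.exp (-x) ≤ 16 := by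
  have h1 := stmt15_sqexp hx
  have h2 : Real.exp (-x) ≤ Real.exp (-(x/2)) := Real.exp_le_exp.2 (by linarith)
  nlinarith [sq_nonneg x]

private noncomputable def stmt15F (hE : ℝ → ℝ) (x w : ℝ) : ℝ := 1 - Real.exp (-x * w) - x * hE w

set_option maxHeartbeats 1600000 in
/-- Continuity of `z ↦ γ_{jz+ℓ}^E` on `[0,∞)` and vanishing of `e^{-jz} γ_{jz+ℓ}^E`
(equivalently of `e^{-jz}(γ_ℓ^E - γ_{jz+ℓ}^E)`) as `z → ∞`. -/
theorem stmt15
    -- truncation function h_E on (-1, ∞) and Lévy triplet of the environment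
    (hE : ℝ → ℝ) (hEcont : ContinuousOn hE (Ioi (-1 : ℝ)))
    (hEbdd : ∃ M : ℝ, ∀ w ∈ Ioi (-1 : ℝ), |hE w| ≤ M)
    (hEid : ∃ δ > (0 : ℝ), ∀ w : ℝ, |w| < δ → hE w = w)
    (αE σE : ℝ) (hσE : 0 ≤ σE)
    (νE : Measure ℝ) (hνEint : IntegrableOn (fun w => min (w ^ 2) 1) (Ioi (-1)) νE)
    (γE : ℝ → ℝ)
    (hγE : ∀ x : ℝ, γE x = αE * x - 1 / 2 * σE ^ 2 * x ^ 2 +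
      ∫ w in Ioi (-1 : ℝ), (1 - Real.exp (-x * w) - x * hE w) ∂νE)
    (j : ℕ) (hj : 1 ≤ j) (ℓ : ℝ) (hℓ : 0 ≤ ℓ) :
    ContinuousOn (fun z : ℝ => γE ((j : ℝ) * z + ℓ)) (Ici 0) ∧
    Tendsto (fun z : ℝ => Real.exp (-(j : ℝ) * z) * γE ((j : ℝ) * z + ℓ))
      atTop (𝓝 0) ∧
    Tendsto (fun z : ℝ => Real.exp (-(j : ℝ) * z) * (γE ℓ - γE ((j : ℝ) * z + ℓ)))
      atTop (𝓝 0) := by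
  obtain ⟨M, hM⟩ := hEbdd
  obtain ⟨δ, hδpos, hδid⟩ := hEid
  have hM0 : 0 ≤ M := le_trans (abs_nonneg _) (hM 0 (by norm_num))
  set δ' : ℝ := min δ (1/2) with hδ'def
  have hδ'pos : 0 < δ' := lt_min hδpos (by norm_num)
  have hδ'half : δ' ≤ 1/2 := min_le_right _ _
  have hδ'δ : δ' ≤ δ := min_le_left _ _
  set μ : Measure ℝ := νE.restrict (Ioi (-1)) with hμ
  have hm_int : Integrable (fun w => min (w^2) 1) μ := by rw [hμ]; exact hνEint
  have hm_nonneg : ∀ w : ℝ, 0 ≤ min (w^2) 1 := fun w => le_min (sq_nonneg w) zero_le_one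
  have hγ' : ∀ x : ℝ, γE x = αE * x - 1 / 2 * σE ^ 2 * x ^ 2 + ∫ w, stmt15F hE x w ∂μ := by
    intro x
    simp only [stmt15F]
    exact hγE x
  -- measurability
  have hFmeas : ∀ x : ℝ, AEStronglyMeasurable (stmt15F hE x) μ := by
    intro x
    show AEStronglyMeasurable (fun w => 1 - Real.exp (-x * w) - x * hE w) μ
    rw [hμ]
    refine ContinuousOn.aestronglyMeasurable ?_ measurableSet_Ioi
    exact (continuousOn_const.sub
      ((Real.continuous_exp.comp (continuous_const.mul continuous_id)).continuousOn)).sub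
      (continuousOn_const.mul hEcont)
  -- uniform bound on compacts
  have hbound1 : ∀ A : ℝ, 0 ≤ A → ∀ x ∈ Icc (0:ℝ) A, ∀ w ∈ Ioi (-1:ℝ),
      |stmt15F hE x w| ≤
        (3 * Real.exp A * A^2 + 3 * Real.exp A + (1 + Real.exp A + A*M)/δ'^2) * min (w^2) 1 := by
    intro A hA x hx w hw
    obtain ⟨hx0, hxA⟩ := hx
    have hwlb : -1 < w := hw
    have hexpA1 : (1:ℝ) ≤ Real.exp A := Real.one_le_exp hA
    rcases lt_or_ge |w| δ' with hsm | hbg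
    · have hEw : hE w = w := hδid w (hsm.trans_le hδ'δ)
      have hw1 : |w| ≤ 1/2 := le_of_lt (hsm.trans_le hδ'half)
      have h1 : |stmt15F hE x w| ≤ 3 * Real.exp |x*w| * (x*w)^2 := by
        have h := stmt15_core (x*w)
        simpa [stmt15F, hEw, neg_mul] using h
      have h2 : Real.exp |x*w| ≤ Real.exp A := by
        apply Real.exp_le_exp.2
        rw [abs_mul, abs_of_nonneg hx0]
        calc x * |w| ≤ A * 1 := mul_le_mul hxA (by linarith [abs_nonneg w]) (abs_nonneg w) hA
          _ = A := mul_one A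
      have h3 : (x*w)^2 ≤ A^2 * w^2 := by
        have hxx : x^2 ≤ A^2 := by nlinarith
        calc (x*w)^2 = x^2 * w^2 := by ring
          _ ≤ A^2 * w^2 := mul_le_mul_of_nonneg_right hxx (sq_nonneg w)
      have hmin : min (w^2) 1 = w^2 := min_eq_left (by nlinarith [sq_abs w, abs_nonneg w])
      rw [hmin]
      have hDpos : 0 ≤ (1 + Real.exp A + A*M)/δ'^2 := by positivity
      calc |stmt15F hE x w| ≤ 3 * Real.exp |x*w| * (x*w)^2 := h1
        _ ≤ 3 * Real.exp A * (A^2 * w^2) := by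
            apply mul_le_mul (by linarith) h3 (sq_nonneg _) (by positivity)
        _ ≤ (3 * Real.exp A * A^2 + 3 * Real.exp A + (1 + Real.exp A + A*M)/δ'^2) * w^2 := by
            have e1 : 0 ≤ 3 * Real.exp A * w^2 :=
              mul_nonneg (by positivity) (sq_nonneg w)
            have e2 : 0 ≤ (1 + Real.exp A + A*M)/δ'^2 * w^2 :=
              mul_nonneg hDpos (sq_nonneg w)
            nlinarith
    · have hEwb : |hE w| ≤ M := hM w hw
      have hexp : Real.exp (-x*w) ≤ Real.exp A := by
        apply Real.exp_le_exp.2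
        rcases le_or_gt 0 w with h0 | h0
        · nlinarith
        · nlinarith
      have h1 : |stmt15F hE x w| ≤ 1 + Real.exp A + A * M := by
        have ht : |stmt15F hE x w| ≤ |1 - Real.exp (-x*w)| + |x * hE w| := abs_sub _ _
        have h2 : |1 - Real.exp (-x*w)| ≤ 1 + Real.exp (-x*w) := by
          rw [abs_sub_comm]
          calc |Real.exp (-x*w) - 1| ≤ |Real.exp (-x*w)| + |(1:ℝ)| := abs_sub _ _
            _ = Real.exp (-x*w) + 1 := by rw [abs_of_pos (Real.exp_pos _), abs_one]
            _ = 1 + Real.exp (-x*w) := by ring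
        have h3 : |x * hE w| ≤ A * M := by
          rw [abs_mul, abs_of_nonneg hx0]
          exact mul_le_mul hxA hEwb (abs_nonneg _) hA
        linarith
      have hminlb : δ'^2 ≤ min (w^2) 1 := by
        apply le_min
        · nlinarith [sq_abs w, abs_nonneg w]
        · nlinarith
      have hpos : (0:ℝ) < δ'^2 := by positivity
      have hnum : (0:ℝ) ≤ 1 + Real.exp A + A*M := by positivity
      have h4 : (1 + Real.exp A + A*M) ≤ (1 + Real.exp A + A*M)/δ'^2 * min (w^2) 1 := by
        rw [div_mul_eq_mul_div, le_div_iff₀ hpos]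
        exact mul_le_mul_of_nonneg_left hminlb hnum
      have h5 : 0 ≤ (3 * Real.exp A * A^2 + 3 * Real.exp A) * min (w^2) 1 :=
        mul_nonneg (by positivity) (hm_nonneg w)
      linarith [h1, h4, h5]
  -- integrability
  have hFint : ∀ x : ℝ, 0 ≤ x → Integrable (stmt15F hE x) μ := by
    intro x hx
    refine (hm_int.const_mul
      (3 * Real.exp x * x^2 + 3 * Real.exp x + (1 + Real.exp x + x*M)/δ'^2)).mono'
      (hFmeas x) ?_
    rw [hμ, ae_restrict_iff' measurableSet_Ioi]
    refine ae_of_all _ fun w hw => ?_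
    rw [Real.norm_eq_abs]
    exact hbound1 x hx x ⟨hx, le_refl x⟩ w hw
  -- continuity of the integral term
  have hIcont : ContinuousOn (fun x : ℝ => ∫ w, stmt15F hE x w ∂μ) (Ici 0) := by
    intro x₀ hx₀
    have hx₀0 : (0:ℝ) ≤ x₀ := hx₀
    have hA : (0:ℝ) ≤ x₀ + 1 := by linarith
    have hev : ∀ᶠ x in 𝓝[Ici (0:ℝ)] x₀, x ∈ Icc (0:ℝ) (x₀+1) := by
      filter_upwards [mem_nhdsWithin_of_mem_nhds (Iio_mem_nhds (lt_add_one x₀)),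
        self_mem_nhdsWithin] with x h1 h2
      exact ⟨h2, le_of_lt h1⟩
    refine continuousWithinAt_of_dominated (bound := fun w =>
        (3 * Real.exp (x₀+1) * (x₀+1)^2 + 3 * Real.exp (x₀+1) +
          (1 + Real.exp (x₀+1) + (x₀+1)*M)/δ'^2) * min (w^2) 1)
      (hev.mono fun x _ => hFmeas x) ?_ (hm_int.const_mul _) ?_
    · refine hev.mono fun x hx => ?_
      rw [hμ, ae_restrict_iff' measurableSet_Ioi]
      refine ae_of_all _ fun w hw => ?_
      rw [Real.norm_eq_abs]
      exact hbound1 (x₀+1) hA x hx w hw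
    · refine ae_of_all _ fun w => ?_
      apply Continuous.continuousWithinAt
      have : Continuous fun x : ℝ => 1 - Real.exp (-x * w) - x * hE w := by fun_prop
      exact this
  -- continuity of γE on [0,∞)
  have hγcont : ContinuousOn γE (Ici 0) := by
    have hP : ContinuousOn (fun x : ℝ => αE * x - 1 / 2 * σE ^ 2 * x ^ 2) (Ici 0) :=
      (Continuous.continuousOn (by fun_prop))
    exact (hP.add hIcont).congr fun x _ => hγ' x
  have hjpos : (0:ℝ) < (j:ℝ) := by exact_mod_cast Nat.pos_of_ne_zero (by omega)
  have hmaps : MapsTo (fun z : ℝ => (j:ℝ)*z + ℓ) (Ici 0) (Ici 0) := by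
    intro z hz
    have hz0 : (0:ℝ) ≤ z := hz
    have : (0:ℝ) ≤ (j:ℝ)*z + ℓ := by positivity
    exact this
  have part1 : ContinuousOn (fun z : ℝ => γE ((j : ℝ) * z + ℓ)) (Ici 0) :=
    hγcont.comp (Continuous.continuousOn (by fun_prop)) hmaps
  -- decay of the integral term
  have hIdec : Tendsto (fun x : ℝ => ∫ w, Real.exp (-x) * stmt15F hE x w ∂μ) atTop (𝓝 0) := by
    have h0 : (0:ℝ) = ∫ _w, (0:ℝ) ∂μ := by simp
    rw [h0]
    refine tendsto_integral_filter_of_dominated_convergence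
      (fun w => (48 + (2+M)/δ'^2) * min (w^2) 1)
      (Eventually.of_forall fun x => (hFmeas x).const_mul _) ?_ (hm_int.const_mul _) ?_
    · filter_upwards [eventually_ge_atTop (0:ℝ)] with x hx
      rw [hμ, ae_restrict_iff' measurableSet_Ioi]
      refine ae_of_all _ fun w hw => ?_
      rw [Real.norm_eq_abs, abs_mul, abs_of_pos (Real.exp_pos _)]
      -- bound 2
      have hwlb : -1 < w := hw
      rcases lt_or_ge |w| δ' with hsm | hbg
      · have hEw : hE w = w := hδid w (hsm.trans_le hδ'δ)
        have hw1 : |w| ≤ 1/2 := le_of_lt (hsm.trans_le hδ'half)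
        have h1 : |stmt15F hE x w| ≤ 3 * Real.exp |x*w| * (x*w)^2 := by
          have h := stmt15_core (x*w)
          simpa [stmt15F, hEw, neg_mul] using h
        have h2 : |x*w| ≤ x/2 := by
          rw [abs_mul, abs_of_nonneg hx]
          nlinarith [abs_nonneg w]
        have h3 : Real.exp (-x) * Real.exp |x*w| ≤ Real.exp (-(x/2)) := by
          rw [← Real.exp_add]
          exact Real.exp_le_exp.2 (by linarith)
        have h4 : (x*w)^2 = x^2 * w^2 := by ring
        have h5 : x^2 * Real.exp (-(x/2)) ≤ 16 := stmt15_sqexp hx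
        have hmin : min (w^2) 1 = w^2 := min_eq_left (by nlinarith [sq_abs w, abs_nonneg w])
        rw [hmin]
        have hD : (0:ℝ) ≤ (2+M)/δ'^2 := by positivity
        calc Real.exp (-x) * |stmt15F hE x w|
            ≤ Real.exp (-x) * (3 * Real.exp |x*w| * (x*w)^2) :=
              mul_le_mul_of_nonneg_left h1 (Real.exp_pos _).le
          _ = 3 * (Real.exp (-x) * Real.exp |x*w|) * (x^2 * w^2) := by rw [h4]; ring
          _ ≤ 3 * Real.exp (-(x/2)) * (x^2 * w^2) := by
              apply mul_le_mul_of_nonneg_right _ (by positivity)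
              linarith
          _ = 3 * (x^2 * Real.exp (-(x/2))) * w^2 := by ring
          _ ≤ 48 * w^2 := by nlinarith [mul_le_mul_of_nonneg_right h5 (sq_nonneg w)]
          _ ≤ (48 + (2+M)/δ'^2) * w^2 := by nlinarith [mul_nonneg hD (sq_nonneg w)]
      · have hEwb : |hE w| ≤ M := hM w hw
        have hxw : Real.exp (-x) * Real.exp (-x*w) ≤ 1 := by
          rw [← Real.exp_add]
          have : -x + -x*w ≤ 0 := by nlinarith
          calc Real.exp (-x + -x*w) ≤ Real.exp 0 := Real.exp_le_exp.2 this
            _ = 1 := Real.exp_zero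
        have hxe : x * Real.exp (-x) ≤ 1 := stmt15_xexp hx
        have he1 : Real.exp (-x) ≤ 1 := by
          calc Real.exp (-x) ≤ Real.exp 0 := Real.exp_le_exp.2 (by linarith)
            _ = 1 := Real.exp_zero
        have h1 : |stmt15F hE x w| ≤ 1 + Real.exp (-x*w) + x * M := by
          have ht : |stmt15F hE x w| ≤ |1 - Real.exp (-x*w)| + |x * hE w| := abs_sub _ _
          have h2 : |1 - Real.exp (-x*w)| ≤ 1 + Real.exp (-x*w) := by
            rw [abs_sub_comm]
            calc |Real.exp (-x*w) - 1| ≤ |Real.exp (-x*w)| + |(1:ℝ)| := abs_sub _ _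
              _ = Real.exp (-x*w) + 1 := by rw [abs_of_pos (Real.exp_pos _), abs_one]
              _ = 1 + Real.exp (-x*w) := by ring
          have h3 : |x * hE w| ≤ x * M := by
            rw [abs_mul, abs_of_nonneg hx]
            exact mul_le_mul_of_nonneg_left hEwb hx
          linarith
        have h6 : Real.exp (-x) * |stmt15F hE x w| ≤ 2 + M := by
          have hh := mul_le_mul_of_nonneg_left h1 (Real.exp_pos (-x)).le
          nlinarith [mul_le_mul_of_nonneg_left hxe hM0]
        have hminlb : δ'^2 ≤ min (w^2) 1 := by
          apply le_min
          · nlinarith [sq_abs w, abs_nonneg w]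
          · nlinarith
        have hpos : (0:ℝ) < δ'^2 := by positivity
        have hnum : (0:ℝ) ≤ 2 + M := by linarith
        have h4 : (2+M) ≤ (2+M)/δ'^2 * min (w^2) 1 := by
          rw [div_mul_eq_mul_div, le_div_iff₀ hpos]
          exact mul_le_mul_of_nonneg_left hminlb hnum
        have h5 : 0 ≤ 48 * min (w^2) 1 := by positivity
        linarith [h6, h4, h5]
    · rw [hμ]
      rw [ae_restrict_iff' measurableSet_Ioi]
      refine ae_of_all _ fun w hw => ?_
      have hw1 : 0 < 1 + w := by linarith [mem_Ioi.mp hw]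
      have heq : (fun x : ℝ => Real.exp (-x) * stmt15F hE x w) =
          fun x => Real.exp (-x) - Real.exp (-((1+w)*x)) - hE w * (x * Real.exp (-x)) := by
        funext x
        have hsplit : Real.exp (-((1+w)*x)) = Real.exp (-x) * Real.exp (-x*w) := by
          rw [← Real.exp_add]; ring_nf
        rw [hsplit]; simp only [stmt15F]; ring
      rw [heq]
      have t1 : Tendsto (fun x : ℝ => Real.exp (-x)) atTop (𝓝 0) :=
        Real.tendsto_exp_neg_atTop_nhds_zero
      have t2 : Tendsto (fun x : ℝ => Real.exp (-((1+w)*x))) atTop (𝓝 0) := by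
        have hc : Tendsto (fun x : ℝ => (1+w)*x) atTop atTop :=
          Tendsto.const_mul_atTop hw1 tendsto_id
        exact t1.comp hc
      have t3 : Tendsto (fun x : ℝ => x * Real.exp (-x)) atTop (𝓝 0) := by
        simpa using Real.tendsto_pow_mul_exp_neg_atTop_nhds_zero 1
      simpa using (t1.sub t2).sub (t3.const_mul (hE w))
  have hIdec' : Tendsto (fun x : ℝ => Real.exp (-x) * ∫ w, stmt15F hE x w ∂μ) atTop (𝓝 0) := by
    have heq : (fun x : ℝ => Real.exp (-x) * ∫ w, stmt15F hE x w ∂μ) =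
        fun x => ∫ w, Real.exp (-x) * stmt15F hE x w ∂μ := by
      funext x
      exact (integral_const_mul _ _).symm
    rw [heq]; exact hIdec
  have hγdec : Tendsto (fun x : ℝ => Real.exp (-x) * γE x) atTop (𝓝 0) := by
    have t1 : Tendsto (fun x : ℝ => αE * (x * Real.exp (-x))) atTop (𝓝 0) := by
      have := (Real.tendsto_pow_mul_exp_neg_atTop_nhds_zero 1).const_mul αE
      simpa using this
    have t2 : Tendsto (fun x : ℝ => 1/2*σE^2 * (x^2 * Real.exp (-x))) atTop (𝓝 0) := by
      have := (Real.tendsto_pow_mul_exp_neg_atTop_nhds_zero 2).const_mul (1/2*σE^2)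
      simpa using this
    have heq : (fun x : ℝ => Real.exp (-x) * γE x) = fun x =>
        αE * (x * Real.exp (-x)) - 1/2*σE^2 * (x^2 * Real.exp (-x)) +
          Real.exp (-x) * ∫ w, stmt15F hE x w ∂μ := by
      funext x; rw [hγ' x]; ring
    rw [heq]
    simpa using (t1.sub t2).add hIdec'
  have hcomp : Tendsto (fun z : ℝ => (j:ℝ)*z + ℓ) atTop atTop :=
    tendsto_atTop_add_const_right _ ℓ (Tendsto.const_mul_atTop hjpos tendsto_id)
  have part2 : Tendsto (fun z : ℝ => Real.exp (-(j : ℝ) * z) * γE ((j : ℝ) * z + ℓ))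
      atTop (𝓝 0) := by
    have h := (hγdec.comp hcomp).const_mul (Real.exp ℓ)
    have heq : (fun z : ℝ => Real.exp (-(j:ℝ)*z) * γE ((j:ℝ)*z+ℓ)) =
        fun z => Real.exp ℓ * (Real.exp (-((j:ℝ)*z+ℓ)) * γE ((j:ℝ)*z+ℓ)) := by
      funext z
      rw [← mul_assoc, ← Real.exp_add]
      have : ℓ + -((j:ℝ)*z+ℓ) = -(j:ℝ)*z := by ring
      rw [this]
    rw [heq]
    simpa [Function.comp] using h
  refine ⟨part1, part2, ?_⟩
  have hexpz : Tendsto (fun z : ℝ => Real.exp (-(j:ℝ)*z)) atTop (𝓝 0) := by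
    have hlin : Tendsto (fun z : ℝ => (j:ℝ)*z) atTop atTop :=
      Tendsto.const_mul_atTop hjpos tendsto_id
    have h := Real.tendsto_exp_neg_atTop_nhds_zero.comp hlin
    have heqc : (fun z : ℝ => Real.exp (-(j:ℝ)*z)) =
        (fun x : ℝ => Real.exp (-x)) ∘ (fun z : ℝ => (j:ℝ)*z) := by
      funext z; simp [Function.comp, neg_mul]
    rw [heqc]; exact h
  have heq : (fun z : ℝ => Real.exp (-(j:ℝ)*z) * (γE ℓ - γE ((j:ℝ)*z+ℓ))) =
      fun z => γE ℓ * Real.exp (-(j:ℝ)*z) - Real.exp (-(j:ℝ)*z) * γE ((j:ℝ)*z+ℓ) := by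
    funext z; ring
  rw [heq]
  simpa using (hexpz.const_mul (γE ℓ)).sub part2
end

section
/- Let U = [−1,1] × (−1,∞) and for k, ℓ ≥ 0 let H_{k,ℓ}(u,w) = 1 − e^{−k u − ℓ w}. Then for every continuous compactly supported function g : U → ℝ with g(0,0) = 0 and every ε > 0, there exist finitely many reals c_1, …, c_m and pairs (k_1,ℓ_1), …, (k_m,ℓ_m) with k_i, ℓ_i ≥ 0 such that sup_{(u,w)∈U} | g(u,w) − Σ_{i=1}^m c_i H_{k_i,ℓ_i}(u,w) | ≤ ε. -/
open Set

lemma decomp' {X : Type} [TopologicalSpace X] (x y : C(X, ℝ)) (Q : C(X, ℝ))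
    (hQ : Q ∈ Algebra.adjoin ℝ ({x, y} : Set C(X, ℝ))) :
    ∃ (n : ℕ) (d : Fin n → ℝ) (M N : Fin n → ℕ),
      ∀ q, Q q = ∑ i, d i * (x q ^ M i * y q ^ N i) := by
  have key : ∃ (ι : Type) (_ : Fintype ι) (d : ι → ℝ) (M N : ι → ℕ),
      ∀ q, Q q = ∑ i, d i * (x q ^ M i * y q ^ N i) := by
    induction hQ using Algebra.adjoin_induction with
    | mem f hf =>
      rcases hf with h | h
      · exact ⟨PUnit, inferInstance, fun _ => 1, fun _ => 1, fun _ => 0,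
          fun q => by simp [h]⟩
      · simp only [Set.mem_singleton_iff] at h
        exact ⟨PUnit, inferInstance, fun _ => 1, fun _ => 0, fun _ => 1,
          fun q => by simp [h]⟩
    | algebraMap r =>
      exact ⟨PUnit, inferInstance, fun _ => r, fun _ => 0, fun _ => 0,
        fun q => by simp⟩
    | add f g hf hg ihf ihg =>
      obtain ⟨ι, _, d, M, N, h1⟩ := ihf
      obtain ⟨ι', _, d', M', N', h2⟩ := ihg
      exact ⟨ι ⊕ ι', inferInstance, Sum.elim d d', Sum.elim M M', Sum.elim N N',
        fun q => by simp [Fintype.sum_sum_type, h1 q, h2 q]⟩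
    | mul f g hf hg ihf ihg =>
      obtain ⟨ι, _, d, M, N, h1⟩ := ihf
      obtain ⟨ι', _, d', M', N', h2⟩ := ihg
      refine ⟨ι × ι', inferInstance, fun p => d p.1 * d' p.2,
        fun p => M p.1 + M' p.2, fun p => N p.1 + N' p.2, fun q => ?_⟩
      simp only [ContinuousMap.mul_apply, h1 q, h2 q, Fintype.sum_prod_type,
        Finset.sum_mul_sum, pow_add]
      refine Finset.sum_congr rfl fun i _ => Finset.sum_congr rfl fun j _ => by ring
  obtain ⟨ι, _, d, M, N, h⟩ := key
  have e := (Fintype.equivFin ι).symm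
  exact ⟨Fintype.card ι, d ∘ e, M ∘ e, N ∘ e, fun q => by
    rw [h q, ← Equiv.sum_comp e (fun i => d i * (x q ^ M i * y q ^ N i))]
    rfl⟩

/-- Stone–Weierstrass type density: on `U = [-1,1] × (-1,∞)`, every continuous
compactly supported function vanishing at the origin is uniformly approximable by
linear combinations of the functions `H_{k,ℓ}(u,w) = 1 - e^{-ku-ℓw}`, `k, ℓ ≥ 0`. -/
theorem stmt16 (g : ℝ × ℝ → ℝ)
    (hgcont : ContinuousOn g (Icc (-1 : ℝ) 1 ×ˢ Ioi (-1 : ℝ)))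
    (hgsupp : ∃ K : Set (ℝ × ℝ), IsCompact K ∧ K ⊆ Icc (-1 : ℝ) 1 ×ˢ Ioi (-1 : ℝ) ∧
      ∀ p ∈ Icc (-1 : ℝ) 1 ×ˢ Ioi (-1 : ℝ), p ∉ K → g p = 0)
    (hg0 : g (0, 0) = 0) :
    ∀ ε > (0 : ℝ), ∃ (m : ℕ) (c k ℓ : Fin m → ℝ),
      (∀ i, 0 ≤ k i) ∧ (∀ i, 0 ≤ ℓ i) ∧
      ∀ p ∈ Icc (-1 : ℝ) 1 ×ˢ Ioi (-1 : ℝ),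
        |g p - ∑ i, c i * (1 - Real.exp (-(k i) * p.1 - (ℓ i) * p.2))| ≤ ε := by
  intro ε hε
  obtain ⟨K, hKc, hKU, hKz⟩ := hgsupp
  have hab : ∃ a b : ℝ, -1 < a ∧ ∀ p ∈ K, p.2 ∈ Icc a b := by
    rcases K.eq_empty_or_nonempty with h | h
    · exact ⟨0, 0, by norm_num, fun p hp => by simp [h] at hp⟩
    · have h2 : IsCompact (Prod.snd '' K) := hKc.image continuous_snd
      obtain ⟨a, ha⟩ := h2.exists_isLeast (h.image _)
      obtain ⟨b, hb⟩ := h2.exists_isGreatest (h.image _)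
      refine ⟨a, b, ?_, fun p hp => ⟨ha.2 ⟨p, hp, rfl⟩, hb.2 ⟨p, hp, rfl⟩⟩⟩
      obtain ⟨p0, hp0K, hp0⟩ := ha.1
      have := (hKU hp0K).2
      rw [hp0] at this
      exact this
  obtain ⟨a, b, ha, hKab⟩ := hab
  set a' : ℝ := (min a 0 - 1) / 2 with ha'def
  set b' : ℝ := max b 0 + 1 with hb'def
  have ha'1 : -1 < a' := by
    have : -1 < min a 0 := lt_min ha (by norm_num)
    rw [ha'def]; linarith
  have ha'a : a' < a := by
    have h1 : -1 < min a 0 := lt_min ha (by norm_num)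
    have h2 : min a 0 ≤ a := min_le_left _ _
    rw [ha'def]; linarith
  have ha'0 : a' ≤ 0 := by
    have : min a 0 ≤ 0 := min_le_right _ _
    rw [ha'def]; linarith
  have hb'b : b < b' := by
    have : b ≤ max b 0 := le_max_left _ _
    rw [hb'def]; linarith
  have hb'0 : (1:ℝ) ≤ b' := by
    have : (0:ℝ) ≤ max b 0 := le_max_right _ _
    rw [hb'def]; linarith
  have ha'b' : a' < b' := by linarith
  set cl : ℝ → ℝ := fun w => max a' (min w b') with hcl
  set wt : ℝ → ℝ := fun y => max a' (-Real.log (max y (Real.exp (-b')))) with hwt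
  have hwtexp : ∀ w : ℝ, wt (Real.exp (-w)) = cl w := by
    intro w
    have : max (Real.exp (-w)) (Real.exp (-b')) = Real.exp (-(min w b')) := by
      rcases le_total w b' with h | h
      · rw [max_eq_left (Real.exp_le_exp.mpr (by linarith)), min_eq_left h]
      · rw [max_eq_right (Real.exp_le_exp.mpr (by linarith)), min_eq_right h]
    rw [hwt]; simp only [this, Real.log_exp, neg_neg, hcl]
  have hwt1 : wt 1 = 0 := by
    rw [hwt]
    simp only [max_eq_left (Real.exp_le_one_iff.mpr (by linarith : -b' ≤ 0)), Real.log_one,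
      neg_zero, max_eq_right ha'0]
  have hext : ∀ p : ℝ × ℝ, p ∈ Icc (-1:ℝ) 1 ×ˢ Ioi (-1:ℝ) → g (p.1, cl p.2) = g p := by
    intro p hp
    rcases le_or_gt p.2 b' with h1 | h1
    · rcases le_or_gt a' p.2 with h2 | h2
      · have : cl p.2 = p.2 := by rw [hcl]; simp [min_eq_left h1, max_eq_right h2]
        rw [this]
      · have hclv : cl p.2 = a' := by
          rw [hcl]; simp [min_eq_left h1, max_eq_left (le_of_lt h2)]
        rw [hclv]
        have hz1 : g (p.1, a') = 0 := by
          apply hKz (p.1, a') ⟨hp.1, ha'1⟩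
          intro hmem
          have := (hKab _ hmem).1
          simp at this; linarith
        have hz2 : g p = 0 := by
          apply hKz _ hp
          intro hmem
          have := (hKab _ hmem).1
          linarith
        rw [hz1, hz2]
    · have hclv : cl p.2 = b' := by
        rw [hcl]; simp [min_eq_right (le_of_lt h1), max_eq_right (le_of_lt ha'b')]
      rw [hclv]
      have hz1 : g (p.1, b') = 0 := by
        apply hKz (p.1, b') ⟨hp.1, by simp only [mem_Ioi]; linarith⟩
        intro hmem
        have := (hKab _ hmem).2
        simp at this; linarith
      have hz2 : g p = 0 := by
        apply hKz _ hp
        intro hmem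
        have := (hKab _ hmem).2
        linarith
      rw [hz1, hz2]
  -- the compact rectangle
  set R : Set (ℝ × ℝ) := Icc (Real.exp (-1)) (Real.exp 1) ×ˢ Icc (0:ℝ) (Real.exp 1) with hR
  have hRcomp : IsCompact R := isCompact_Icc.prod isCompact_Icc
  haveI : CompactSpace R := isCompact_iff_compactSpace.mp hRcomp
  -- F on R
  set F : ℝ × ℝ → ℝ := fun q => g (-Real.log q.1, wt q.2) with hF
  have hwtcont : Continuous wt := by
    apply continuous_const.max
    apply Continuous.neg
    apply Continuous.log (continuous_id.max continuous_const)
    intro y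
    have : (0:ℝ) < max y (Real.exp (-b')) := lt_of_lt_of_le (Real.exp_pos _) (le_max_right _ _)
    exact ne_of_gt this
  have hwtmem : ∀ y : ℝ, wt y ∈ Ioi (-1:ℝ) := by
    intro y
    have : a' ≤ wt y := le_max_left _ _
    simp only [mem_Ioi]; linarith
  have hFcont : ContinuousOn F R := by
    apply hgcont.comp
    · apply ContinuousOn.prodMk
      · apply ContinuousOn.neg
        apply ContinuousOn.log (continuous_fst.continuousOn)
        rintro ⟨x, y⟩ hq
        have : Real.exp (-1) ≤ x := hq.1.1
        have := Real.exp_pos (-1:ℝ)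
        simp only
        linarith
      · exact (hwtcont.comp continuous_snd).continuousOn
    · rintro ⟨x, y⟩ hq
      constructor
      · have h1 : Real.exp (-1) ≤ x := hq.1.1
        have h2 : x ≤ Real.exp 1 := hq.1.2
        have hx0 : (0:ℝ) < x := lt_of_lt_of_le (Real.exp_pos _) h1
        have l1 : -1 ≤ Real.log x := by
          rw [← Real.log_exp (-1)]
          exact Real.log_le_log (Real.exp_pos _) h1
        have l2 : Real.log x ≤ 1 := by
          rw [← Real.log_exp 1]
          exact Real.log_le_log hx0 h2
        constructor <;> simp only <;> linarith
      · exact hwtmem y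
  -- coordinate continuous maps on the subtype
  set π₁ : C(R, ℝ) := ⟨fun q => (q : ℝ × ℝ).1, continuous_fst.comp continuous_subtype_val⟩ with hπ₁
  set π₂ : C(R, ℝ) := ⟨fun q => (q : ℝ × ℝ).2, continuous_snd.comp continuous_subtype_val⟩ with hπ₂
  set A : Subalgebra ℝ C(R, ℝ) := Algebra.adjoin ℝ ({π₁, π₂} : Set C(R, ℝ)) with hA
  have hsep : A.SeparatesPoints := by
    intro p q hpq
    by_cases h1 : (p : ℝ × ℝ).1 = (q : ℝ × ℝ).1
    · have h2 : (p : ℝ × ℝ).2 ≠ (q : ℝ × ℝ).2 := by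
        intro h2
        exact hpq (Subtype.ext (Prod.ext h1 h2))
      exact ⟨π₂, ⟨π₂, Algebra.subset_adjoin (by simp), rfl⟩, h2⟩
    · exact ⟨π₁, ⟨π₁, Algebra.subset_adjoin (by simp), rfl⟩, h1⟩
  -- Stone–Weierstrass
  have hfc : Continuous (fun q : R => -(F q)) := by
    exact (hFcont.restrict).neg
  obtain ⟨⟨Q, hQA⟩, hQ⟩ :=
    ContinuousMap.exists_mem_subalgebra_near_continuous_of_separatesPoints A hsep
      (fun q : R => -(F q)) hfc (ε/2) (by linarith)
  obtain ⟨n, d, M, N, hdec⟩ := decomp' π₁ π₂ Q hQA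
  refine ⟨n, d, fun i => (M i : ℝ), fun i => (N i : ℝ), fun i => Nat.cast_nonneg _,
    fun i => Nat.cast_nonneg _, ?_⟩
  intro p hp
  -- the two points of R
  have hone : ((1:ℝ), (1:ℝ)) ∈ R := by
    constructor
    · exact ⟨Real.exp_le_one_iff.mpr (by norm_num), Real.one_le_exp (by norm_num)⟩
    · exact ⟨by norm_num, Real.one_le_exp (by norm_num)⟩
  have hqp : (Real.exp (-p.1), Real.exp (-p.2)) ∈ R := by
    have h1 : -1 ≤ p.1 := hp.1.1
    have h2 : p.1 ≤ 1 := hp.1.2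
    have h3 : -1 < p.2 := hp.2
    constructor
    · exact ⟨Real.exp_le_exp.mpr (by linarith), Real.exp_le_exp.mpr (by linarith)⟩
    · exact ⟨(Real.exp_pos _).le, Real.exp_le_exp.mpr (by linarith)⟩
  set one : R := ⟨((1:ℝ),(1:ℝ)), hone⟩ with honedef
  set qp : R := ⟨(Real.exp (-p.1), Real.exp (-p.2)), hqp⟩ with hqpdef
  -- identities for F
  have hFqp : F qp = g p := by
    show g (-Real.log (Real.exp (-p.1)), wt (Real.exp (-p.2))) = g p
    rw [Real.log_exp, neg_neg, hwtexp]
    exact hext p hp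
  have hFone : F one = 0 := by
    show g (-Real.log 1, wt 1) = 0
    rw [Real.log_one, neg_zero, hwt1]
    exact hg0
  -- values of Q
  have hQone : Q one = ∑ i, d i := by
    rw [hdec one]
    refine Finset.sum_congr rfl fun i _ => ?_
    show d i * ((1:ℝ) ^ M i * (1:ℝ) ^ N i) = d i
    simp
  have hQqp : Q qp = ∑ i, d i * Real.exp (-(M i : ℝ) * p.1 - (N i : ℝ) * p.2) := by
    rw [hdec qp]
    refine Finset.sum_congr rfl fun i _ => ?_
    show d i * (Real.exp (-p.1) ^ M i * Real.exp (-p.2) ^ N i) = _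
    rw [← Real.exp_nat_mul, ← Real.exp_nat_mul, ← Real.exp_add]
    ring_nf
  -- the sum identity
  have hsum : ∑ i, d i * (1 - Real.exp (-(M i : ℝ) * p.1 - (N i : ℝ) * p.2))
      = Q one - Q qp := by
    rw [hQone, hQqp, ← Finset.sum_sub_distrib]
    refine Finset.sum_congr rfl fun i _ => by ring
  rw [hsum]
  -- final estimate
  have h1 : |Q qp + F qp| < ε/2 := by
    have := hQ qp
    rw [Real.norm_eq_abs] at this
    have h' : Q qp - -(F qp) = Q qp + F qp := by ring
    rwa [h'] at this
  have h2 : |Q one| < ε/2 := by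
    have := hQ one
    rw [Real.norm_eq_abs, hFone] at this
    simpa using this
  rw [hFqp] at h1
  have : |g p - (Q one - Q qp)| ≤ |Q qp + g p| + |Q one| := by
    have heq : g p - (Q one - Q qp) = (Q qp + g p) - Q one := by ring
    rw [heq]
    exact abs_sub _ _
  have h1' : |Q qp + g p| ≤ ε/2 := h1.le
  calc |g p - (Q one - Q qp)| ≤ |Q qp + g p| + |Q one| := this
    _ ≤ ε/2 + ε/2 := add_le_add h1' h2.le
    _ = ε := by ring
end

section
/- (i) There exists a constant L > 0 such that for all y, y' ∈ (0,1]: min(−log y, −log y') (y − y')² + min(y, y')² |log y − log y'| ≤ L |y − y'| (and the left-hand side, extended by 0 when y or y' equals 0, satisfies the same bound on [0,1]²). (ii) Define g₂(y,u) = y (e^{u log y} − 1) for y ∈ (0,1] and u ∈ [−1/2, 1]. There exists a constant C > 0 such that for all u ∈ [−1/2,1] and all y, y' ∈ (0,1]: ( g₂(y,u) − g₂(y',u) )² ≤ C |y − y'| u². -/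
open Set

/-- `exp b - exp c ≤ (b - c) * exp b`. -/
lemma stmt19_exp_sub (b c : ℝ) : Real.exp b - Real.exp c ≤ (b - c) * Real.exp b := by
  have h := Real.add_one_le_exp (c - b)
  have h2 : (c - b + 1) * Real.exp b ≤ Real.exp (c - b) * Real.exp b :=
    mul_le_mul_of_nonneg_right h (Real.exp_nonneg b)
  rw [← Real.exp_add] at h2
  have : c - b + b = c := by ring
  rw [this] at h2
  nlinarith [Real.exp_pos b]

/-- `-log y ≤ 2 / √y` for `0 < y`. -/
lemma stmt19_neg_log (y : ℝ) (hy : 0 < y) : -Real.log y ≤ 2 / Real.sqrt y := by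
  have hs : 0 < Real.sqrt y := Real.sqrt_pos.2 hy
  have h := Real.log_le_sub_one_of_pos (show (0:ℝ) < 1 / Real.sqrt y by positivity)
  rw [one_div, Real.log_inv, Real.log_sqrt hy.le] at h
  rw [div_eq_mul_inv]
  linarith

/-- `log (1+x) ≤ 2√x` for `0 ≤ x`. -/
lemma stmt19_log_one_add (x : ℝ) (hx : 0 ≤ x) : Real.log (1 + x) ≤ 2 * Real.sqrt x := by
  have hs : 0 ≤ Real.sqrt x := Real.sqrt_nonneg x
  have hsq : Real.sqrt x ^ 2 = x := Real.sq_sqrt hx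
  have h1 : Real.log (1 + x) ≤ Real.log ((1 + Real.sqrt x) ^ 2) := by
    apply Real.log_le_log (by linarith)
    nlinarith
  rw [Real.log_pow] at h1
  have h2 : Real.log (1 + Real.sqrt x) ≤ Real.sqrt x := by
    have := Real.log_le_sub_one_of_pos (show (0:ℝ) < 1 + Real.sqrt x by linarith)
    linarith
  push_cast at h1
  linarith

/-- `|exp(u log y) - 1| ≤ 2|u|/√y` for `u ∈ [-1/2,1]`, `0 < y ≤ 1`. -/
lemma stmt19_exp_sub_one (u y : ℝ) (hu1 : -(1:ℝ)/2 ≤ u) (hu2 : u ≤ 1)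
    (hy : 0 < y) (hy1 : y ≤ 1) :
    |Real.exp (u * Real.log y) - 1| ≤ 2 * |u| / Real.sqrt y := by
  have hs : 0 < Real.sqrt y := Real.sqrt_pos.2 hy
  have hlog : Real.log y ≤ 0 := Real.log_nonpos hy.le hy1
  have hnl : -Real.log y ≤ 2 / Real.sqrt y := stmt19_neg_log y hy
  rcases le_or_gt 0 u with hu | hu
  · have harg : u * Real.log y ≤ 0 := mul_nonpos_of_nonneg_of_nonpos hu hlog
    have he1 : Real.exp (u * Real.log y) ≤ 1 := Real.exp_le_one_iff.2 harg
    have hb : 1 - Real.exp (u * Real.log y) ≤ -(u * Real.log y) := by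
      have := Real.add_one_le_exp (u * Real.log y); linarith
    rw [abs_of_nonpos (by linarith), abs_of_nonneg hu]
    have : -(u * Real.log y) = u * (-Real.log y) := by ring
    rw [this] at hb
    have : u * (-Real.log y) ≤ u * (2 / Real.sqrt y) :=
      mul_le_mul_of_nonneg_left hnl hu
    calc -(Real.exp (u * Real.log y) - 1) = 1 - Real.exp (u * Real.log y) := by ring
      _ ≤ u * (2 / Real.sqrt y) := by linarith
      _ = 2 * u / Real.sqrt y := by ring
  · -- u < 0 : Bernoulli via weighted AM-GM
    set s : ℝ := (Real.sqrt y)⁻¹ with hs_def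
    have hspos : 0 < s := by positivity
    have hsle : Real.sqrt y ≤ 1 := Real.sqrt_le_one.mpr hy1
    have hs1 : 1 ≤ s := by
      rw [hs_def]
      exact (one_le_inv₀ hs).2 hsle
    set v : ℝ := -2 * u with hv_def
    have hv0 : 0 ≤ v := by rw [hv_def]; nlinarith
    have hv1 : v ≤ 1 := by rw [hv_def]; linarith
    have hrw : s ^ v = Real.exp (u * Real.log y) := by
      rw [Real.rpow_def_of_pos hspos, hs_def, Real.log_inv, Real.log_sqrt hy.le, hv_def]
      ring_nf
    have hbern : s ^ v * 1 ^ (1 - v) ≤ v * s + (1 - v) * 1 :=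
      Real.geom_mean_le_arith_mean2_weighted hv0 (by linarith) hspos.le zero_le_one
        (by ring)
    rw [Real.one_rpow, mul_one, mul_one] at hbern
    have hexp1 : 1 ≤ Real.exp (u * Real.log y) := by
      rw [Real.one_le_exp_iff]
      nlinarith
    rw [abs_of_nonneg (by linarith), abs_of_neg hu]
    have : Real.exp (u * Real.log y) - 1 ≤ v * s := by
      rw [← hrw]; linarith
    calc Real.exp (u * Real.log y) - 1 ≤ v * s := this
      _ = 2 * -u / Real.sqrt y := by rw [hv_def, hs_def]; ring

/-- `|exp(u log y) - exp(u log y')| ≤ |u| (log y - log y') / √y'`. -/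
lemma stmt19_exp_diff (u y y' : ℝ) (hu1 : -(1:ℝ)/2 ≤ u) (hu2 : u ≤ 1)
    (hy' : 0 < y') (hle : y' ≤ y) (hy1 : y ≤ 1) :
    |Real.exp (u * Real.log y) - Real.exp (u * Real.log y')| ≤
      |u| * (Real.log y - Real.log y') / Real.sqrt y' := by
  have hy : 0 < y := lt_of_lt_of_le hy' hle
  have hs : 0 < Real.sqrt y' := Real.sqrt_pos.2 hy'
  have hs1 : Real.sqrt y' ≤ 1 := Real.sqrt_le_one.mpr (le_trans hle hy1)
  have hlogle : Real.log y' ≤ Real.log y := Real.log_le_log hy' hle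
  have hlogy : Real.log y ≤ 0 := Real.log_nonpos hy.le hy1
  have hlogy' : Real.log y' ≤ 0 := Real.log_nonpos hy'.le (le_trans hle hy1)
  rcases le_or_gt 0 u with hu | hu
  · have hmono : Real.exp (u * Real.log y') ≤ Real.exp (u * Real.log y) :=
      Real.exp_le_exp.2 (mul_le_mul_of_nonneg_left hlogle hu)
    have hb := stmt19_exp_sub (u * Real.log y) (u * Real.log y')
    have he1 : Real.exp (u * Real.log y) ≤ 1 :=
      Real.exp_le_one_iff.2 (mul_nonpos_of_nonneg_of_nonpos hu hlogy)
    rw [abs_of_nonneg (by linarith), abs_of_nonneg hu]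
    have hΔ : 0 ≤ Real.log y - Real.log y' := by linarith
    have key : Real.exp (u * Real.log y) - Real.exp (u * Real.log y') ≤
        u * (Real.log y - Real.log y') := by
      nlinarith [Real.exp_pos (u * Real.log y)]
    have h1s : 1 ≤ 1 / Real.sqrt y' := by
      rw [le_div_iff₀ hs]; linarith
    calc Real.exp (u * Real.log y) - Real.exp (u * Real.log y') ≤
        u * (Real.log y - Real.log y') := key
      _ = u * (Real.log y - Real.log y') * 1 := by ring
      _ ≤ u * (Real.log y - Real.log y') * (1 / Real.sqrt y') := by
          apply mul_le_mul_of_nonneg_left h1s (mul_nonneg hu hΔ)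
      _ = u * (Real.log y - Real.log y') / Real.sqrt y' := by ring
  · have hmono : Real.exp (u * Real.log y) ≤ Real.exp (u * Real.log y') := by
      apply Real.exp_le_exp.2
      nlinarith
    have hb := stmt19_exp_sub (u * Real.log y') (u * Real.log y)
    have hexp' : Real.exp (u * Real.log y') ≤ 1 / Real.sqrt y' := by
      have h1 : u * Real.log y' ≤ (1/2) * (-Real.log y') := by nlinarith
      have h2 : Real.exp ((1/2) * (-Real.log y')) = 1 / Real.sqrt y' := by
        rw [show (1/2 : ℝ) * (-Real.log y') = -(Real.log y' / 2) by ring,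
          ← Real.log_sqrt hy'.le, Real.exp_neg, Real.exp_log hs, one_div]
      rw [← h2]
      exact Real.exp_le_exp.2 h1
    rw [abs_of_nonpos (by linarith), abs_of_neg hu]
    have hΔ : 0 ≤ Real.log y - Real.log y' := by linarith
    have key : Real.exp (u * Real.log y') - Real.exp (u * Real.log y) ≤
        (-u) * (Real.log y - Real.log y') * Real.exp (u * Real.log y') := by
      nlinarith [Real.exp_pos (u * Real.log y')]
    calc -(Real.exp (u * Real.log y) - Real.exp (u * Real.log y'))
        = Real.exp (u * Real.log y') - Real.exp (u * Real.log y) := by ring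
      _ ≤ (-u) * (Real.log y - Real.log y') * Real.exp (u * Real.log y') := key
      _ ≤ (-u) * (Real.log y - Real.log y') * (1 / Real.sqrt y') := by
          apply mul_le_mul_of_nonneg_left hexp' (mul_nonneg (by linarith) hΔ)
      _ = -u * (Real.log y - Real.log y') / Real.sqrt y' := by ring

/-- Main estimate for part (ii): `|g₂(y,u) - g₂(y',u)| ≤ 4|u|√(y-y')` for `y' ≤ y`. -/
lemma stmt19_main (u y y' : ℝ) (hu1 : -(1:ℝ)/2 ≤ u) (hu2 : u ≤ 1)
    (hy' : 0 < y') (hle : y' ≤ y) (hy1 : y ≤ 1) :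
    |y * (Real.exp (u * Real.log y) - 1) - y' * (Real.exp (u * Real.log y') - 1)| ≤
      4 * |u| * Real.sqrt (y - y') := by
  have hy : 0 < y := lt_of_lt_of_le hy' hle
  rcases eq_or_lt_of_le hle with h | h
  · subst h; simp
  set d : ℝ := y - y' with hd_def
  have hd : 0 < d := by rw [hd_def]; linarith
  have hsd : 0 < Real.sqrt d := Real.sqrt_pos.2 hd
  have hsy : 0 < Real.sqrt y := Real.sqrt_pos.2 hy
  have hsy' : 0 < Real.sqrt y' := Real.sqrt_pos.2 hy'
  have hsqd : Real.sqrt d ^ 2 = d := Real.sq_sqrt hd.le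
  have hsqy' : Real.sqrt y' ^ 2 = y' := Real.sq_sqrt hy'.le
  have hsdy : Real.sqrt d ≤ Real.sqrt y := Real.sqrt_le_sqrt (by rw [hd_def]; linarith)
  set E : ℝ := Real.exp (u * Real.log y) with hE_def
  set E' : ℝ := Real.exp (u * Real.log y') with hE'_def
  have hdecomp : y * (E - 1) - y' * (E' - 1) = (y - y') * (E - 1) + y' * (E - E') := by
    ring
  have hb1 : |E - 1| ≤ 2 * |u| / Real.sqrt y := stmt19_exp_sub_one u y hu1 hu2 hy hy1
  have hb2 : |E - E'| ≤ |u| * (Real.log y - Real.log y') / Real.sqrt y' :=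
    stmt19_exp_diff u y y' hu1 hu2 hy' hle hy1
  have hΔ : Real.log y - Real.log y' ≤ 2 * Real.sqrt d / Real.sqrt y' := by
    have hyy' : y / y' = 1 + d / y' := by
      rw [hd_def]; field_simp; ring
    have h1 : Real.log y - Real.log y' = Real.log (1 + d / y') := by
      rw [← hyy', Real.log_div (ne_of_gt hy) (ne_of_gt hy')]
    have h2 : Real.log (1 + d / y') ≤ 2 * Real.sqrt (d / y') :=
      stmt19_log_one_add _ (div_nonneg hd.le hy'.le)
    have h3 : Real.sqrt (d / y') = Real.sqrt d / Real.sqrt y' := Real.sqrt_div hd.le y'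
    rw [h3] at h2
    rw [h1, mul_div_assoc]
    linarith
  have hΔ0 : 0 ≤ Real.log y - Real.log y' :=
    sub_nonneg.2 (Real.log_le_log hy' hle)
  -- first term
  have ht1 : (y - y') * |E - 1| ≤ 2 * |u| * Real.sqrt d := by
    have : (y - y') * |E - 1| ≤ d * (2 * |u| / Real.sqrt y) := by
      rw [← hd_def]
      exact mul_le_mul_of_nonneg_left hb1 hd.le
    have hdiv : d / Real.sqrt y ≤ Real.sqrt d := by
      rw [div_le_iff₀ hsy]
      calc d = Real.sqrt d * Real.sqrt d := (Real.mul_self_sqrt hd.le).symm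
        _ ≤ Real.sqrt d * Real.sqrt y := mul_le_mul_of_nonneg_left hsdy hsd.le
    have habs : 0 ≤ |u| := abs_nonneg u
    calc (y - y') * |E - 1| ≤ d * (2 * |u| / Real.sqrt y) := this
      _ = 2 * |u| * (d / Real.sqrt y) := by ring
      _ ≤ 2 * |u| * Real.sqrt d := by
          apply mul_le_mul_of_nonneg_left hdiv (by positivity)
  -- second term
  have ht2 : y' * |E - E'| ≤ 2 * |u| * Real.sqrt d := by
    have h1 : y' * |E - E'| ≤ y' * (|u| * (Real.log y - Real.log y') / Real.sqrt y') :=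
      mul_le_mul_of_nonneg_left hb2 hy'.le
    have h2 : y' * (|u| * (Real.log y - Real.log y') / Real.sqrt y') ≤
        y' * (|u| * (2 * Real.sqrt d / Real.sqrt y') / Real.sqrt y') := by
      gcongr
    have h3 : y' * (|u| * (2 * Real.sqrt d / Real.sqrt y') / Real.sqrt y') =
        2 * |u| * Real.sqrt d := by
      field_simp
      rw [hsqy']; ring
    linarith
  calc |y * (E - 1) - y' * (E' - 1)| = |(y - y') * (E - 1) + y' * (E - E')| := by
        rw [hdecomp]
    _ ≤ |(y - y') * (E - 1)| + |y' * (E - E')| := abs_add_le _ _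
    _ = (y - y') * |E - 1| + y' * |E - E'| := by
        rw [abs_mul, abs_mul, abs_of_nonneg (by linarith : (0:ℝ) ≤ y - y'),
          abs_of_nonneg hy'.le]
    _ ≤ 2 * |u| * Real.sqrt d + 2 * |u| * Real.sqrt d := add_le_add ht1 ht2
    _ = 4 * |u| * Real.sqrt d := by ring

/-- Part (i) helper for `y' ≤ y`. -/
lemma stmt19_part1 (y y' : ℝ) (hy' : 0 < y') (hle : y' ≤ y) (hy1 : y ≤ 1) :
    min (-Real.log y) (-Real.log y') * (y - y') ^ 2 +
      (min y y') ^ 2 * |Real.log y - Real.log y'| ≤ 2 * (y - y') := by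
  have hy : 0 < y := lt_of_lt_of_le hy' hle
  have hlog : Real.log y' ≤ Real.log y := Real.log_le_log hy' hle
  rw [min_eq_left (neg_le_neg hlog), min_eq_right hle, abs_of_nonneg (by linarith)]
  have hlogy : Real.log y ≤ 0 := Real.log_nonpos hy.le hy1
  have hy'1 : y' ≤ 1 := le_trans hle hy1
  have hmul : y * (-Real.log y) ≤ 1 := by
    have h := Real.log_le_sub_one_of_pos (show (0:ℝ) < 1/y by positivity)
    rw [one_div, Real.log_inv] at h
    have : y * (-Real.log y) ≤ y * (y⁻¹ - 1) := mul_le_mul_of_nonneg_left h hy.le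
    have hid : y * (y⁻¹ - 1) = 1 - y := by field_simp
    nlinarith
  have h2 : y' * (Real.log y - Real.log y') ≤ y - y' := by
    have h := Real.log_le_sub_one_of_pos (show (0:ℝ) < y/y' by positivity)
    rw [Real.log_div (ne_of_gt hy) (ne_of_gt hy')] at h
    have : y' * (Real.log y - Real.log y') ≤ y' * (y/y' - 1) :=
      mul_le_mul_of_nonneg_left h hy'.le
    have hid : y' * (y/y' - 1) = y - y' := by field_simp
    nlinarith
  have t1 : (-Real.log y) * (y - y') ^ 2 ≤ y - y' := by
    nlinarith [mul_nonneg (neg_nonneg.2 hlogy) (sub_nonneg.2 hle)]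
  have t2 : y' ^ 2 * (Real.log y - Real.log y') ≤ y - y' := by
    nlinarith [mul_nonneg hy'.le (sub_nonneg.2 hlog)]
  linarith

/-- Lemma 6.3: (i) `min(-log y, -log y')(y-y')² + min(y,y')²|log y - log y'| ≤ L|y-y'|`
on `(0,1]` (extended by `0` when `y` or `y'` vanishes), and
(ii) with `g₂(y,u) = y(e^{u log y} - 1)`, `(g₂(y,u) - g₂(y',u))² ≤ C|y-y'|u²`
for `u ∈ [-1/2,1]` and `y, y' ∈ (0,1]`. -/
theorem stmt19 :
    (∃ L > (0 : ℝ), ∀ y ∈ Icc (0 : ℝ) 1, ∀ y' ∈ Icc (0 : ℝ) 1,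
      (if y = 0 ∨ y' = 0 then 0 else
        min (-Real.log y) (-Real.log y') * (y - y') ^ 2 +
          (min y y') ^ 2 * |Real.log y - Real.log y'|) ≤ L * |y - y'|) ∧
    (∃ C > (0 : ℝ), ∀ u ∈ Icc (-(1 : ℝ) / 2) 1, ∀ y ∈ Ioc (0 : ℝ) 1, ∀ y' ∈ Ioc (0 : ℝ) 1,
      (y * (Real.exp (u * Real.log y) - 1) - y' * (Real.exp (u * Real.log y') - 1)) ^ 2 ≤
        C * |y - y'| * u ^ 2) := by
  constructor
  · refine ⟨2, by norm_num, ?_⟩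
    intro y hy y' hy'
    split_ifs with h
    · positivity
    · push_neg at h
      obtain ⟨h1, h2⟩ := h
      have hy0 : 0 < y := lt_of_le_of_ne hy.1 (Ne.symm h1)
      have hy'0 : 0 < y' := lt_of_le_of_ne hy'.1 (Ne.symm h2)
      rcases le_total y' y with hle | hle
      · have habs : |y - y'| = y - y' := abs_of_nonneg (by linarith)
        rw [habs]
        exact stmt19_part1 y y' hy'0 hle hy.2
      · have habs : |y - y'| = y' - y := by
          rw [abs_of_nonpos (by linarith)]; ring
        rw [habs]
        have := stmt19_part1 y' y hy0 hle hy'.2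
        rw [min_comm (-Real.log y') (-Real.log y), min_comm y' y,
          abs_sub_comm (Real.log y') (Real.log y)] at this
        have hsq : (y' - y) ^ 2 = (y - y') ^ 2 := by ring
        rw [hsq] at this
        linarith
  · refine ⟨16, by norm_num, ?_⟩
    intro u hu y hy y' hy'
    have key : ∀ a b : ℝ, 0 < b → b ≤ a → a ≤ 1 →
        (a * (Real.exp (u * Real.log a) - 1) - b * (Real.exp (u * Real.log b) - 1)) ^ 2 ≤
          16 * |a - b| * u ^ 2 := by
      intro a b hb hba ha1
      have hm := stmt19_main u a b (by linarith [hu.1]) hu.2 hb hba ha1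
      have hab : 0 ≤ a - b := by linarith
      have hsq : Real.sqrt (a - b) ^ 2 = a - b := Real.sq_sqrt hab
      have habs : |a - b| = a - b := abs_of_nonneg hab
      have h0 : (a * (Real.exp (u * Real.log a) - 1) -
          b * (Real.exp (u * Real.log b) - 1)) ^ 2 ≤ (4 * |u| * Real.sqrt (a - b)) ^ 2 := by
        rw [← sq_abs]
        apply pow_le_pow_left₀ (abs_nonneg _) hm
      calc (a * (Real.exp (u * Real.log a) - 1) -
            b * (Real.exp (u * Real.log b) - 1)) ^ 2
          ≤ (4 * |u| * Real.sqrt (a - b)) ^ 2 := h0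
        _ = 16 * (a - b) * u ^ 2 := by rw [mul_pow, mul_pow, hsq, sq_abs]; ring
        _ = 16 * |a - b| * u ^ 2 := by rw [habs]
    rcases le_total y' y with hle | hle
    · exact key y y' hy'.1 hle hy.2
    · have := key y' y hy.1 hle hy'.2
      rw [abs_sub_comm y' y] at this
      calc (y * (Real.exp (u * Real.log y) - 1) -
            y' * (Real.exp (u * Real.log y') - 1)) ^ 2
          = (y' * (Real.exp (u * Real.log y') - 1) -
            y * (Real.exp (u * Real.log y) - 1)) ^ 2 := by ring
        _ ≤ 16 * |y - y'| * u ^ 2 := this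
end
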